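/- Let A be an irreducible aperiodic 0-1 matrix with Perron eigenvalue Λ, left eigenvector u and right eigenvector v (both strictly positive, normalized so that Σ u_i v_i = 1). Define the Parry measure of the cylinder set of an admissible word j = J₁...J_n by ν(cyl(j)) = u_{J₁} · v_{J_n} / Λ^{n−1}. Suppose j = J₁...J_n and k = K₁...K_n are admissible words such that for every i ≥ 1, the number of admissible extensions of j to the right by i letters equals the number of admissible right-extensions of k by i letters, and likewise the numbers of admissible left-extensions of length i agree. Then ν(cyl(j)) = ν(cyl(k)). -/

import Mathlib

open Matrix

open Matrix Finset

theorem parry_key {s : ℕ} (A : Matrix (Fin s) (Fin s) ℝ)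
    (hA : ∀ i j, 0 ≤ A i j)
    (m₀ : ℕ) (hm₀ : ∀ i j, 0 < (A ^ m₀) i j)
    (Λ : ℝ) (hΛ : 0 < Λ) (v : Fin s → ℝ) (hv : ∀ i, 0 < v i)
    (hright : ∀ i, ∑ j, A i j * v j = Λ * v i)
    (x y : Fin s)
    (hext : ∀ i : ℕ, ∑ l, (A ^ i) x l = ∑ l, (A ^ i) y l) :
    v x = v y := by
  haveI : Nonempty (Fin s) := ⟨x⟩
  have hAp : ∀ t : ℕ, ∀ a b, 0 ≤ (A ^ t) a b := by
    intro t
    induction t with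
    | zero => intro a b; rw [pow_zero]; by_cases h : a = b <;> simp [Matrix.one_apply, h]
    | succ t ih =>
      intro a b
      rw [pow_succ, Matrix.mul_apply]
      exact Finset.sum_nonneg fun j _ => mul_nonneg (ih a j) (hA j b)
  -- eigenvector equation for powers
  have heig : ∀ t : ℕ, ∀ l, ∑ j, (A ^ t) l j * v j = Λ ^ t * v l := by
    intro t
    induction t with
    | zero => intro l; simp [Matrix.one_apply]
    | succ t ih =>
      intro l
      rw [pow_succ']
      simp_rw [Matrix.mul_apply, Finset.sum_mul, mul_assoc]
      rw [Finset.sum_comm]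
      simp_rw [← Finset.mul_sum, ih]
      simp_rw [← mul_assoc, mul_comm (A l _) (Λ ^ t), mul_assoc, ← Finset.mul_sum, hright]
      ring
  -- the normalized row-sum vectors
  set w : ℕ → Fin s → ℝ := fun i l => (∑ k, (A ^ i) l k) / Λ ^ i with hwdef
  have hΛt : ∀ t : ℕ, (0:ℝ) < Λ ^ t := fun t => pow_pos hΛ t
  have wrec : ∀ t i : ℕ, ∀ l, w (t + i) l = (∑ j, (A ^ t) l j * w i j) / Λ ^ t := by
    intro t i l
    have hp : (A ^ (t + i)) = A ^ t * A ^ i := pow_add A t i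
    simp only [hwdef, hp, Matrix.mul_apply]
    rw [Finset.sum_comm]
    simp_rw [← Finset.mul_sum]
    rw [eq_div_iff (ne_of_gt (hΛt t))]
    rw [Finset.sum_div, Finset.sum_mul]
    congr 1; ext j
    field_simp
    ring
  set M : ℕ → ℝ := fun i => univ.sup' univ_nonempty (fun l => w i l / v l) with hMdef
  set m : ℕ → ℝ := fun i => univ.inf' univ_nonempty (fun l => w i l / v l) with hmdef
  have hmle : ∀ i l, m i * v l ≤ w i l := by
    intro i l
    have h1 : m i ≤ w i l / v l := Finset.inf'_le _ (Finset.mem_univ l)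
    rw [← le_div_iff₀ (hv l)] at *
    exact h1
  have hMge : ∀ i l, w i l ≤ M i * v l := by
    intro i l
    have h1 : w i l / v l ≤ M i := Finset.le_sup' (fun l => w i l / v l) (Finset.mem_univ l)
    rwa [div_le_iff₀ (hv l)] at h1
  have hmM : ∀ i, m i ≤ M i := fun i =>
    le_trans (Finset.inf'_le _ (Finset.mem_univ x)) (Finset.le_sup' (fun l => w i l / v l) (Finset.mem_univ x))
  -- monotonicity of m
  have hmono : ∀ i, m i ≤ m (i + 1) := by
    intro i
    apply Finset.le_inf'
    intro l _
    have h1 : w (1 + i) l = (∑ j, (A ^ 1) l j * w i j) / Λ ^ 1 := wrec 1 i l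
    rw [add_comm 1 i] at h1
    rw [h1, le_div_iff₀ (hv l), le_div_iff₀ (hΛt 1), pow_one, pow_one]
    calc m i * v l * Λ = m i * (Λ * v l) := by ring
      _ = m i * (∑ j, A l j * v j) := by rw [hright]
      _ = ∑ j, A l j * (m i * v j) := by rw [Finset.mul_sum]; congr 1; ext j; ring
      _ ≤ ∑ j, A l j * w i j := by
          apply Finset.sum_le_sum; intro j _
          exact mul_le_mul_of_nonneg_left (hmle i j) (hA l j)
  have hmono' : ∀ i, m 0 ≤ m i := by
    intro i
    induction i with
    | zero => exact le_refl _
    | succ i ih => exact le_trans ih (hmono i)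
  -- minimal entry of A^m₀ and max of v
  set β : ℝ := univ.inf' univ_nonempty (fun p : Fin s × Fin s => (A ^ m₀) p.1 p.2) with hβdef
  have hβpos : 0 < β := by
    rw [hβdef, Finset.lt_inf'_iff]
    exact fun p _ => hm₀ p.1 p.2
  have hβle : ∀ a b, β ≤ (A ^ m₀) a b := fun a b =>
    Finset.inf'_le (fun p : Fin s × Fin s => (A ^ m₀) p.1 p.2) (Finset.mem_univ (a, b))
  set V : ℝ := univ.sup' univ_nonempty v with hVdef
  have hvleV : ∀ l, v l ≤ V := fun l => Finset.le_sup' v (Finset.mem_univ l)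
  have hVpos : 0 < V := lt_of_lt_of_le (hv x) (hvleV x)
  have hVlesum : V ≤ ∑ l, v l := by
    obtain ⟨l0, _, hl0⟩ := Finset.exists_mem_eq_sup' (univ_nonempty (α := Fin s)) v
    rw [hVdef, hl0]
    exact Finset.single_le_sum (fun l _ => le_of_lt (hv l)) (Finset.mem_univ l0)
  set μ : ℝ := Λ ^ m₀ with hμdef
  have hμpos : 0 < μ := hΛt m₀
  have hβμ : β ≤ μ := by
    have h1 : β * V ≤ β * ∑ l, v l := by
      exact mul_le_mul_of_nonneg_left hVlesum (le_of_lt hβpos)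
    have h2 : β * ∑ l, v l ≤ ∑ j, (A ^ m₀) x j * v j := by
      rw [Finset.mul_sum]
      exact Finset.sum_le_sum fun j _ => mul_le_mul_of_nonneg_right (hβle x j) (le_of_lt (hv j))
    have h3 : (∑ j, (A ^ m₀) x j * v j) = μ * v x := heig m₀ x
    have h4 : μ * v x ≤ μ * V := mul_le_mul_of_nonneg_left (hvleV x) (le_of_lt hμpos)
    have : β * V ≤ μ * V := by linarith
    exact le_of_mul_le_mul_right this hVpos
  set θ : ℝ := 1 - β / μ with hθdef
  have hθ0 : 0 ≤ θ := by
    rw [hθdef, sub_nonneg, div_le_one hμpos]; exact hβμ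
  have hθ1 : θ < 1 := by
    rw [hθdef]
    have : 0 < β / μ := div_pos hβpos hμpos
    linarith
  -- contraction step
  have hcontr : ∀ i, M (i + m₀) - m (i + m₀) ≤ θ * (M i - m i) := by
    intro i
    set S1 : ℝ := ∑ j, (w i j - m i * v j) with hS1def
    set S2 : ℝ := ∑ j, (M i * v j - w i j) with hS2def
    have hS1 : 0 ≤ S1 := Finset.sum_nonneg fun j _ => sub_nonneg.2 (hmle i j)
    have hS2 : 0 ≤ S2 := Finset.sum_nonneg fun j _ => sub_nonneg.2 (hMge i j)
    have hS12 : (M i - m i) * V ≤ S1 + S2 := by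
      have hsum : S1 + S2 = (M i - m i) * ∑ j, v j := by
        rw [hS1def, hS2def, ← Finset.sum_add_distrib, Finset.mul_sum]
        congr 1; ext j; ring
      rw [hsum]
      exact mul_le_mul_of_nonneg_left hVlesum (sub_nonneg.2 (hmM i))
    have hml : m i + β * S1 / (μ * V) ≤ m (i + m₀) := by
      apply Finset.le_inf'
      intro l _
      have h1 : w (i + m₀) l = (∑ j, (A ^ m₀) l j * w i j) / μ := by
        rw [add_comm i m₀]; exact wrec m₀ i l
      have hkey : m i * (μ * v l) + β * S1 ≤ ∑ j, (A ^ m₀) l j * w i j := by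
        have hsplit : (∑ j, (A ^ m₀) l j * w i j)
            = (∑ j, (A ^ m₀) l j * (m i * v j)) + ∑ j, (A ^ m₀) l j * (w i j - m i * v j) := by
          rw [← Finset.sum_add_distrib]; congr 1; ext j; ring
        have he1 : (∑ j, (A ^ m₀) l j * (m i * v j)) = m i * (μ * v l) := by
          have : (∑ j, (A ^ m₀) l j * (m i * v j)) = m i * ∑ j, (A ^ m₀) l j * v j := by
            rw [Finset.mul_sum]; congr 1; ext j; ring
          rw [this, heig m₀ l]
        have he2 : β * S1 ≤ ∑ j, (A ^ m₀) l j * (w i j - m i * v j) := by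
          rw [hS1def, Finset.mul_sum]
          exact Finset.sum_le_sum fun j _ =>
            mul_le_mul_of_nonneg_right (hβle l j) (sub_nonneg.2 (hmle i j))
        rw [hsplit, he1]
        linarith
      rw [h1, le_div_iff₀ (hv l), le_div_iff₀ hμpos]
      have hfrac : β * S1 / (μ * V) * v l * μ ≤ β * S1 := by
        rw [div_mul_eq_mul_div, div_mul_eq_mul_div, div_le_iff₀ (by positivity)]
        have : β * S1 * v l * μ ≤ β * S1 * V * μ := by
          have := mul_le_mul_of_nonneg_right
            (mul_le_mul_of_nonneg_left (hvleV l) (mul_nonneg (le_of_lt hβpos) hS1))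
            (le_of_lt hμpos)
          linarith [this]
        linarith [this]
      calc (m i + β * S1 / (μ * V)) * v l * μ
          = m i * (μ * v l) + β * S1 / (μ * V) * v l * μ := by ring
        _ ≤ m i * (μ * v l) + β * S1 := by linarith
        _ ≤ ∑ j, (A ^ m₀) l j * w i j := hkey
    have hMl : M (i + m₀) ≤ M i - β * S2 / (μ * V) := by
      apply Finset.sup'_le
      intro l _
      have h1 : w (i + m₀) l = (∑ j, (A ^ m₀) l j * w i j) / μ := by
        rw [add_comm i m₀]; exact wrec m₀ i l
      have hkey : (∑ j, (A ^ m₀) l j * w i j) ≤ M i * (μ * v l) - β * S2 := by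
        have hsplit : (∑ j, (A ^ m₀) l j * w i j)
            = (∑ j, (A ^ m₀) l j * (M i * v j)) - ∑ j, (A ^ m₀) l j * (M i * v j - w i j) := by
          rw [← Finset.sum_sub_distrib]; congr 1; ext j; ring
        have he1 : (∑ j, (A ^ m₀) l j * (M i * v j)) = M i * (μ * v l) := by
          have : (∑ j, (A ^ m₀) l j * (M i * v j)) = M i * ∑ j, (A ^ m₀) l j * v j := by
            rw [Finset.mul_sum]; congr 1; ext j; ring
          rw [this, heig m₀ l]
        have he2 : β * S2 ≤ ∑ j, (A ^ m₀) l j * (M i * v j - w i j) := by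
          rw [hS2def, Finset.mul_sum]
          exact Finset.sum_le_sum fun j _ =>
            mul_le_mul_of_nonneg_right (hβle l j) (sub_nonneg.2 (hMge i j))
        rw [hsplit, he1]
        linarith
      rw [h1, div_le_iff₀ (hv l), div_le_iff₀ hμpos]
      have hfrac : β * S2 ≤ β * S2 / (μ * V) * v l * μ ∨ True := Or.inr trivial
      have hfrac2 : β * S2 * (v l / V) ≤ β * S2 := by
        have hd : v l / V ≤ 1 := (div_le_one hVpos).2 (hvleV l)
        have := mul_le_mul_of_nonneg_left hd (mul_nonneg (le_of_lt hβpos) hS2)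
        linarith [this]
      have hrw : (M i - β * S2 / (μ * V)) * v l * μ = M i * (μ * v l) - β * S2 * (v l / V) := by
        field_simp
      rw [hrw]
      linarith
    have hfinal : β * (S1 + S2) / (μ * V) ≥ β / μ * (M i - m i) := by
      rw [ge_iff_le, div_mul_eq_mul_div, div_le_div_iff₀ hμpos (by positivity)]
      have h1 : β * ((M i - m i) * V) ≤ β * (S1 + S2) := by
        exact mul_le_mul_of_nonneg_left hS12 (le_of_lt hβpos)
      calc β * (M i - m i) * (μ * V) = (β * ((M i - m i) * V)) * μ := by ring
        _ ≤ (β * (S1 + S2)) * μ := mul_le_mul_of_nonneg_right h1 (le_of_lt hμpos)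
    have hadd : β * S1 / (μ * V) + β * S2 / (μ * V) = β * (S1 + S2) / (μ * V) := by
      rw [← add_div]; ring_nf
    have : M (i + m₀) - m (i + m₀) ≤ (M i - m i) - β / μ * (M i - m i) := by
      have := sub_le_sub hMl hml
      have h2 : (M i - β * S2 / (μ * V)) - (m i + β * S1 / (μ * V))
          = (M i - m i) - (β * S1 / (μ * V) + β * S2 / (μ * V)) := by ring
      rw [h2, hadd] at this
      linarith [hfinal, this]
    rw [hθdef]
    linarith [this]
  -- iterate the contraction
  have hiter : ∀ k : ℕ, M (m₀ * k) - m (m₀ * k) ≤ θ ^ k * (M 0 - m 0) := by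
    intro k
    induction k with
    | zero => simp
    | succ k ih =>
      have h1 : m₀ * (k + 1) = m₀ * k + m₀ := by ring
      rw [h1, pow_succ]
      calc M (m₀ * k + m₀) - m (m₀ * k + m₀) ≤ θ * (M (m₀ * k) - m (m₀ * k)) := hcontr _
        _ ≤ θ * (θ ^ k * (M 0 - m 0)) := mul_le_mul_of_nonneg_left ih hθ0
        _ = θ ^ k * θ * (M 0 - m 0) := by ring
  -- equal row sums
  have hwxy : ∀ i, w i x = w i y := by
    intro i
    simp only [hwdef]
    rw [hext i]
  have hw0 : ∀ l, w 0 l = 1 := by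
    intro l
    simp [hwdef, Matrix.one_apply]
  have hm0pos : 0 < m 0 := by
    rw [hmdef, Finset.lt_inf'_iff]
    intro l _
    rw [hw0 l]
    exact div_pos one_pos (hv l)
  have hwpos : ∀ i, m 0 * v x ≤ w i x := fun i =>
    le_trans (mul_le_mul_of_nonneg_right (hmono' i) (le_of_lt (hv x))) (hmle i x)
  -- the main estimate
  have habs : ∀ k : ℕ, m 0 * v x * |1 / v x - 1 / v y| ≤ θ ^ k * (M 0 - m 0) := by
    intro k
    set i := m₀ * k with hidef
    have hx1 : w i x / v x ≤ M i := Finset.le_sup' (fun l => w i l / v l) (Finset.mem_univ x)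
    have hx2 : m i ≤ w i x / v x := Finset.inf'_le (fun l => w i l / v l) (Finset.mem_univ x)
    have hy1 : w i y / v y ≤ M i := Finset.le_sup' (fun l => w i l / v l) (Finset.mem_univ y)
    have hy2 : m i ≤ w i y / v y := Finset.inf'_le (fun l => w i l / v l) (Finset.mem_univ y)
    have heq : w i x / v x - w i y / v y = w i x * (1 / v x - 1 / v y) := by
      rw [← hwxy i]
      ring
    have hb : |w i x * (1 / v x - 1 / v y)| ≤ M i - m i := by
      rw [abs_le, ← heq]
      constructor <;> linarith
    have hwix : 0 ≤ w i x := le_trans (le_of_lt (mul_pos hm0pos (hv x))) (hwpos i)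
    have hchain : m 0 * v x * |1 / v x - 1 / v y| ≤ w i x * |1 / v x - 1 / v y| :=
      mul_le_mul_of_nonneg_right (hwpos i) (abs_nonneg _)
    have habs2 : w i x * |1 / v x - 1 / v y| = |w i x * (1 / v x - 1 / v y)| := by
      rw [abs_mul, abs_of_nonneg hwix]
    calc m 0 * v x * |1 / v x - 1 / v y| ≤ w i x * |1 / v x - 1 / v y| := hchain
      _ = |w i x * (1 / v x - 1 / v y)| := habs2
      _ ≤ M i - m i := hb
      _ ≤ θ ^ k * (M 0 - m 0) := hiter k
  -- conclude
  by_contra hne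
  have hΔ : 1 / v x - 1 / v y ≠ 0 := by
    intro h
    apply hne
    have : 1 / v x = 1 / v y := by linarith
    have := congrArg (fun t => t⁻¹) this
    simpa [one_div, inv_inv] using this
  have hΔpos : 0 < |1 / v x - 1 / v y| := abs_pos.2 hΔ
  set a : ℝ := m 0 * v x * |1 / v x - 1 / v y| with hadef
  have hapos : 0 < a := mul_pos (mul_pos hm0pos (hv x)) hΔpos
  set C : ℝ := M 0 - m 0 with hCdef
  have hC0 : 0 ≤ C := sub_nonneg.2 (hmM 0)
  obtain ⟨k, hk⟩ := exists_pow_lt_of_lt_one (show (0:ℝ) < a / (C + 1) by positivity) hθ1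
  have h1 : θ ^ k * (C + 1) < a := by
    rw [div_eq_mul_inv] at hk
    have := mul_lt_mul_of_pos_right hk (show (0:ℝ) < C + 1 by linarith)
    rwa [mul_assoc, inv_mul_cancel₀ (by linarith : C + 1 ≠ 0), mul_one] at this
  have h2 : θ ^ k * C ≤ θ ^ k * (C + 1) := by
    have : (0:ℝ) ≤ θ ^ k := pow_nonneg hθ0 k
    nlinarith
  linarith [habs k]



/-- Parry measure comparison: if two admissible words `J`, `K` of length `n` have the same
numbers of admissible right-extensions and left-extensions of every length `i`, then their
cylinder sets have equal Parry measure `u_{J₁} v_{J_n} / Λ^{n−1}`. -/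
theorem eventual_gaussian_stmt3 (s : ℕ) (A : Matrix (Fin s) (Fin s) ℝ)
    (h01 : ∀ i j, A i j = 0 ∨ A i j = 1)
    (hirr : ∀ i j, ∃ m : ℕ, 0 < (A ^ m) i j)
    (haper : ∃ m₀ : ℕ, ∀ m : ℕ, m₀ ≤ m → ∀ i j, 0 < (A ^ m) i j)
    (Λ : ℝ) (hΛ : 0 < Λ) (u v : Fin s → ℝ)
    (hu : ∀ i, 0 < u i) (hv : ∀ i, 0 < v i)
    (hleft : ∀ j, ∑ i, u i * A i j = Λ * u j)
    (hright : ∀ i, ∑ j, A i j * v j = Λ * v i)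
    (hnorm : ∑ i, u i * v i = 1)
    (n : ℕ) (hn : 0 < n) (J K : Fin n → Fin s)
    (hJ : ∀ i : ℕ, ∀ h : i + 1 < n, A (J ⟨i, Nat.lt_of_succ_lt h⟩) (J ⟨i + 1, h⟩) = 1)
    (hK : ∀ i : ℕ, ∀ h : i + 1 < n, A (K ⟨i, Nat.lt_of_succ_lt h⟩) (K ⟨i + 1, h⟩) = 1)
    (hrightext : ∀ i : ℕ,
      ∑ l, (A ^ i) (J ⟨n - 1, Nat.sub_lt hn one_pos⟩) l
        = ∑ l, (A ^ i) (K ⟨n - 1, Nat.sub_lt hn one_pos⟩) l)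
    (hleftext : ∀ i : ℕ,
      ∑ l, (A ^ i) l (J ⟨0, hn⟩) = ∑ l, (A ^ i) l (K ⟨0, hn⟩)) :
    u (J ⟨0, hn⟩) * v (J ⟨n - 1, Nat.sub_lt hn one_pos⟩) / Λ ^ (n - 1)
      = u (K ⟨0, hn⟩) * v (K ⟨n - 1, Nat.sub_lt hn one_pos⟩) / Λ ^ (n - 1) := by
  have hA : ∀ i j, 0 ≤ A i j := fun i j => by rcases h01 i j with h | h <;> simp [h]
  obtain ⟨m₀, hm⟩ := haper
  have hm₀ := hm m₀ le_rfl
  have hvv := parry_key A hA m₀ hm₀ Λ hΛ v hv hright _ _ hrightext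
  have hAT : ∀ i j, 0 ≤ Aᵀ i j := fun i j => hA j i
  have hm₀T : ∀ i j, 0 < (Aᵀ ^ m₀) i j := by
    intro i j
    rw [← Matrix.transpose_pow]
    exact hm₀ j i
  have hrightT : ∀ i, ∑ j, Aᵀ i j * u j = Λ * u i := by
    intro i
    simp only [Matrix.transpose_apply]
    have h2 : ∑ j, A j i * u j = ∑ j, u j * A j i :=
      Finset.sum_congr rfl fun j _ => mul_comm _ _
    rw [h2]
    exact hleft i
  have hextT : ∀ i : ℕ, ∑ l, (Aᵀ ^ i) (J ⟨0, hn⟩) l = ∑ l, (Aᵀ ^ i) (K ⟨0, hn⟩) l := by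
    intro i
    simp only [← Matrix.transpose_pow, Matrix.transpose_apply]
    exact hleftext i
  have huu := parry_key Aᵀ hAT m₀ hm₀T Λ hΛ u hu hrightT _ _ hextT
  rw [huu, hvv]
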